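/- Let $Z$ be white noise with finite second moments, $y^\delta = y^\dagger + \delta Z$, and $(u_j)$ an orthonormal basis. For $\varepsilon > 0$ and $\kappa \in \mathbb{N}$, $\mathbb{P}\left(\exists\, m \ge \kappa : \left|\sum_{j=1}^m (y^\delta - y^\dagger, u_j)^2 - m\delta^2\right| > \varepsilon m \delta^2\right) \le \frac{1}{\varepsilon}\,\mathbb{E}\left[\left|\frac{1}{\kappa}\sum_{j=1}^\kappa ((Z,u_j)^2 - 1)\right|\right]$, and this bound tends to $0$ as $\kappa \to \infty$, uniformly in $\delta$. -/

import Mathlib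

open MeasureTheory ProbabilityTheory Finset Filter

section aux

variable {Ω : Type*} [MeasureSpace Ω] [IsProbabilityMeasure (ℙ : Measure Ω)]


lemma shift_indep (Z : ℕ → Ω → ℝ)
    (hindep : iIndepFun Z ℙ) :
    iIndepFun (fun n => Z (n + 1)) ℙ := by
  rw [iIndepFun_iff_measure_inter_preimage_eq_mul]
  intro S sets hsets
  classical
  have h := hindep.measure_inter_preimage_eq_mul (S.image (· + 1))
    (sets := fun j => if j ∈ S.image (· + 1) then sets (j - 1) else Set.univ) ?_
  · have h1 : (⋂ j ∈ S.image (· + 1), Z j ⁻¹'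
        (if j ∈ S.image (· + 1) then sets (j - 1) else Set.univ))
        = ⋂ i ∈ S, Z (i + 1) ⁻¹' sets i := by
      ext ω
      simp only [Set.mem_iInter]
      constructor
      · intro hh i hi
        have := hh (i + 1) (Finset.mem_image.mpr ⟨i, hi, rfl⟩)
        rwa [if_pos (Finset.mem_image.mpr ⟨i, hi, rfl⟩), Nat.add_sub_cancel] at this
      · intro hh j hj
        obtain ⟨i, hi, rfl⟩ := Finset.mem_image.mp hj
        rw [if_pos hj, Nat.add_sub_cancel]
        exact hh i hi
    have h2 : ∏ j ∈ S.image (· + 1), ℙ (Z j ⁻¹'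
        (if j ∈ S.image (· + 1) then sets (j - 1) else Set.univ))
        = ∏ i ∈ S, ℙ (Z (i + 1) ⁻¹' sets i) := by
      rw [Finset.prod_image (fun a _ b _ h => by omega)]
      refine Finset.prod_congr rfl (fun i hi => ?_)
      rw [if_pos (Finset.mem_image.mpr ⟨i, hi, rfl⟩), Nat.add_sub_cancel]
    rw [h1, h2] at h
    exact h
  · intro j hj
    rw [if_pos hj]
    obtain ⟨i, hi, rfl⟩ := Finset.mem_image.mp hj
    rw [Nat.add_sub_cancel]
    exact hsets i hi


lemma law_pi (X : ℕ → Ω → ℝ) (hXm : ∀ j, Measurable (X j))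
    (hXindep : iIndepFun X ℙ)
    (hXident : ∀ j, IdentDistrib (X j) (X 0) ℙ ℙ) (N : ℕ) :
    (ℙ : Measure Ω).map (fun ω (l : Fin N) => X l ω)
      = Measure.pi (fun _ : Fin N => (ℙ : Measure Ω).map (X 0)) := by
  have hν : IsProbabilityMeasure ((ℙ : Measure Ω).map (X 0)) :=
    Measure.isProbabilityMeasure_map (hXm 0).aemeasurable
  have hW : Measurable (fun ω (l : Fin N) => X l ω) :=
    measurable_pi_lambda _ (fun l => hXm l)
  symm
  apply Measure.pi_eq
  intro s hs
  rw [Measure.map_apply hW (MeasurableSet.univ_pi hs)]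
  classical
  set s' : ℕ → Set ℝ := fun l => if h : l < N then s ⟨l, h⟩ else Set.univ with hs'
  have hs'm : ∀ l, MeasurableSet (s' l) := by
    intro l
    by_cases h : l < N
    · simpa [hs', dif_pos h] using hs ⟨l, h⟩
    · simp [hs', dif_neg h]
  have hpre : (fun ω (l : Fin N) => X l ω) ⁻¹' (Set.pi Set.univ s)
      = ⋂ l ∈ Finset.range N, X l ⁻¹' s' l := by
    ext ω
    simp only [Set.mem_preimage, Set.mem_pi, Set.mem_univ, forall_true_left, Set.mem_iInter,
      Finset.mem_range]
    constructor
    · intro h l hl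
      simpa [hs', dif_pos hl] using h ⟨l, hl⟩
    · intro h l
      simpa [hs', dif_pos l.isLt] using h l l.isLt
  rw [hpre, hXindep.meas_biInter (fun l _ => ⟨s' l, hs'm l, rfl⟩)]
  rw [← Fin.prod_univ_eq_prod_range (fun l => ℙ (X l ⁻¹' s' l)) N]
  apply Finset.prod_congr rfl
  intro l _
  have h1 : s' (l : ℕ) = s l := by simp [hs', dif_pos l.isLt]
  rw [h1, ← (hXident l).map_eq, Measure.map_apply (hXm l) (hs l)]

lemma key_swap (X : ℕ → Ω → ℝ) (hXm : ∀ j, Measurable (X j))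
    (hXindep : iIndepFun X ℙ)
    (hXident : ∀ j, IdentDistrib (X j) (X 0) ℙ ℙ)
    {N m i j : ℕ} (him : i < m) (hjm : j < m) (hmN : m ≤ N)
    {C : Set (ℝ × (ℕ → ℝ))} (hC : MeasurableSet C) :
    ∫ ω in (fun ω => ((∑ l ∈ range m, X l ω : ℝ),
        (fun k => if m + k < N then X (m + k) ω else 0 : ℕ → ℝ))) ⁻¹' C, X i ω
    = ∫ ω in (fun ω => ((∑ l ∈ range m, X l ω : ℝ),
        (fun k => if m + k < N then X (m + k) ω else 0 : ℕ → ℝ))) ⁻¹' C, X j ω := by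
  classical
  have hiN : i < N := lt_of_lt_of_le him hmN
  have hjN : j < N := lt_of_lt_of_le hjm hmN
  set ν : Measure ℝ := (ℙ : Measure Ω).map (X 0) with hν
  set vv : (Fin N → ℝ) → ℕ → ℝ := fun v l => if h : l < N then v ⟨l, h⟩ else 0 with hvv
  have hvvm : ∀ t : ℕ, Measurable (fun v : Fin N → ℝ => vv v t) := by
    intro t
    by_cases h : t < N
    · have : (fun v : Fin N → ℝ => vv v t) = fun v => v ⟨t, h⟩ := funext fun v => dif_pos h
      rw [this]; exact measurable_pi_apply _
    · have : (fun v : Fin N → ℝ => vv v t) = fun _ => 0 := funext fun v => dif_neg h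
      rw [this]; exact measurable_const
  set S : (Fin N → ℝ) → ℝ × (ℕ → ℝ) :=
    fun v => ((∑ l ∈ range m, vv v l : ℝ), fun k => vv v (m + k)) with hS
  have hSm : Measurable S :=
    (Finset.measurable_sum _ (fun l _ => hvvm l)).prodMk
      (measurable_pi_lambda _ (fun k => hvvm (m + k)))
  set W : Ω → (Fin N → ℝ) := fun ω l => X l ω with hW
  have hWm : Measurable W := measurable_pi_lambda _ (fun l => hXm l)
  have hlaw := law_pi X hXm hXindep hXident N
  have hGSW : (fun ω => ((∑ l ∈ range m, X l ω : ℝ),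
      (fun k => if m + k < N then X (m + k) ω else 0 : ℕ → ℝ))) = S ∘ W := by
    funext ω
    apply Prod.ext
    · simp only [Function.comp_apply, hS]
      refine Finset.sum_congr rfl (fun l hl => ?_)
      have hlN : l < N := lt_of_lt_of_le (Finset.mem_range.mp hl) hmN
      simp only [hvv, dif_pos hlN, hW]
    · funext k
      simp only [Function.comp_apply, hS, hvv]
      by_cases h : m + k < N
      · rw [if_pos h, dif_pos h]
      · rw [if_neg h, dif_neg h]
  -- rewrite both sides as integrals over the product measure
  have hstep : ∀ t : ℕ, t < N →
      ∫ ω in (fun ω => ((∑ l ∈ range m, X l ω : ℝ),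
        (fun k => if m + k < N then X (m + k) ω else 0 : ℕ → ℝ))) ⁻¹' C, X t ω
      = ∫ v, Set.indicator (S ⁻¹' C) (fun v => vv v t) v ∂(Measure.pi fun _ : Fin N => ν) := by
    intro t htN
    rw [hGSW]
    have hpre : (S ∘ W) ⁻¹' C = W ⁻¹' (S ⁻¹' C) := rfl
    rw [hpre, ← integral_indicator (hWm (hSm hC))]
    have hind : (fun ω => Set.indicator (W ⁻¹' (S ⁻¹' C)) (X t) ω)
        = (fun v => Set.indicator (S ⁻¹' C) (fun v => vv v t) v) ∘ W := by
      funext ω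
      simp only [Function.comp_apply, Set.indicator_apply, Set.mem_preimage]
      by_cases h : S (W ω) ∈ C
      · simp only [if_pos h, hvv, dif_pos htN, hW]
      · simp only [if_neg h]
    rw [hind, ← hlaw]
    exact (integral_map hWm.aemeasurable
      (((hvvm t).indicator (hSm hC)).aestronglyMeasurable)).symm
  rw [hstep i hiN, hstep j hjN]
  -- now use the swap
  set a : Fin N := ⟨i, hiN⟩ with ha
  set b : Fin N := ⟨j, hjN⟩ with hb
  set e := Equiv.swap a b with he
  set σ' : (Fin N → ℝ) → (Fin N → ℝ) := fun v l => v (e l) with hσ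
  have hσm : Measurable σ' := measurable_pi_lambda _ (fun l => measurable_pi_apply _)
  have hνP : IsProbabilityMeasure ν := Measure.isProbabilityMeasure_map (hXm 0).aemeasurable
  have hσmap : (Measure.pi fun _ : Fin N => ν).map σ' = Measure.pi fun _ : Fin N => ν := by
    symm
    apply Measure.pi_eq
    intro s hs
    rw [Measure.map_apply hσm (MeasurableSet.univ_pi hs)]
    have : σ' ⁻¹' (Set.pi Set.univ s) = Set.pi Set.univ (fun l => s (e.symm l)) := by
      ext v
      simp only [Set.mem_preimage, Set.mem_pi, Set.mem_univ, forall_true_left, hσ]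
      constructor
      · intro h l
        have := h (e.symm l)
        rwa [Equiv.apply_symm_apply] at this
      · intro h l
        have := h (e l)
        rwa [Equiv.symm_apply_apply] at this
    rw [this, Measure.pi_pi]
    exact Equiv.prod_comp e.symm (fun l => ν (s l))
  have hswapval : ∀ l, Equiv.swap i j l < m ↔ l < m := by
    intro l
    rcases eq_or_ne l i with rfl | h1
    · rw [Equiv.swap_apply_left]; omega
    rcases eq_or_ne l j with rfl | h2
    · rw [Equiv.swap_apply_right]; omega
    · rw [Equiv.swap_apply_of_ne_of_ne h1 h2]
  have hSσ : ∀ v, S (σ' v) = S v := by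
    intro v
    have hval : ∀ l, l < m → vv (σ' v) l = vv v (Equiv.swap i j l) := by
      intro l hl
      have hlN : l < N := lt_of_lt_of_le hl hmN
      rw [hvv]
      simp only [dif_pos hlN, hσ]
      rcases eq_or_ne l i with rfl | h1
      · have : e ⟨l, hlN⟩ = b := by
          rw [he, show (⟨l, hlN⟩ : Fin N) = a from rfl, Equiv.swap_apply_left]
        rw [this, Equiv.swap_apply_left, hb]
        simp [dif_pos hjN]
      rcases eq_or_ne l j with rfl | h2
      · have : e ⟨l, hlN⟩ = a := by
          rw [he, show (⟨l, hlN⟩ : Fin N) = b from rfl, Equiv.swap_apply_right]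
        rw [this, Equiv.swap_apply_right, ha]
        simp [dif_pos hiN]
      · have : e ⟨l, hlN⟩ = ⟨l, hlN⟩ := by
          rw [he]
          exact Equiv.swap_apply_of_ne_of_ne (by simp [ha, Fin.ext_iff, h1])
            (by simp [hb, Fin.ext_iff, h2])
        rw [this, Equiv.swap_apply_of_ne_of_ne h1 h2]
        simp [dif_pos hlN]
    apply Prod.ext
    · simp only [hS]
      rw [Finset.sum_congr rfl (fun l hl => hval l (Finset.mem_range.mp hl))]
      exact Finset.sum_equiv (Equiv.swap i j)
        (by intro l; simp only [Finset.mem_range]; exact (hswapval l).symm)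
        (fun l _ => rfl)
    · simp only [hS]
      funext k
      rw [hvv]
      by_cases h : m + k < N
      · simp only [dif_pos h, hσ]
        have : e ⟨m + k, h⟩ = ⟨m + k, h⟩ := by
          rw [he]
          exact Equiv.swap_apply_of_ne_of_ne (by simp [ha, Fin.ext_iff]; omega)
            (by simp [hb, Fin.ext_iff]; omega)
        rw [this]
      · simp only [dif_neg h]
  have hval_i : ∀ v, vv (σ' v) i = vv v j := by
    intro v
    rw [hvv]
    simp only [dif_pos hiN, dif_pos hjN, hσ]
    have : e ⟨i, hiN⟩ = b := by rw [he, show (⟨i, hiN⟩ : Fin N) = a from rfl, Equiv.swap_apply_left]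
    rw [this]
  have hcomp : (fun v => Set.indicator (S ⁻¹' C) (fun v => vv v i) v) ∘ σ'
      = fun v => Set.indicator (S ⁻¹' C) (fun v => vv v j) v := by
    funext v
    simp only [Function.comp_apply, Set.indicator_apply, Set.mem_preimage, hSσ v, hval_i v]
  calc (∫ v, Set.indicator (S ⁻¹' C) (fun v => vv v i) v ∂(Measure.pi fun _ : Fin N => ν))
      = ∫ v, Set.indicator (S ⁻¹' C) (fun v => vv v i) v
          ∂((Measure.pi fun _ : Fin N => ν).map σ') := by rw [hσmap]
    _ = ∫ v, Set.indicator (S ⁻¹' C) (fun v => vv v i) (σ' v)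
          ∂(Measure.pi fun _ : Fin N => ν) :=
        integral_map hσm.aemeasurable (((hvvm i).indicator (hSm hC)).aestronglyMeasurable)
    _ = ∫ v, Set.indicator (S ⁻¹' C) (fun v => vv v j) v ∂(Measure.pi fun _ : Fin N => ν) := by
        refine integral_congr_ae (Filter.Eventually.of_forall fun v => ?_)
        simpa using congrFun hcomp v
lemma doob (X : ℕ → Ω → ℝ) (hXm : ∀ j, Measurable (X j))
    (hXindep : iIndepFun X ℙ)
    (hXident : ∀ j, IdentDistrib (X j) (X 0) ℙ ℙ)
    (hXint : Integrable (X 0))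
    {ε : ℝ} (hε : 0 < ε) {κ : ℕ} (hκ : 1 ≤ κ) (N : ℕ) :
    ℙ {ω | ∃ m, κ ≤ m ∧ m ≤ N ∧ ε * m < |∑ l ∈ range m, X l ω|}
      ≤ ENNReal.ofReal ((1 / (ε * κ)) * ∫ ω, |∑ l ∈ range κ, X l ω|) := by
  classical
  have hXint' : ∀ l, Integrable (X l) := fun l => ((hXident l).integrable_iff).mpr hXint
  set T : ℕ → Ω → ℝ := fun m ω => ∑ l ∈ range m, X l ω with hT
  have hTm : ∀ m, Measurable (T m) := fun m => Finset.measurable_sum _ (fun l _ => hXm l)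
  have hTint : ∀ m, Integrable (T m) := fun m => integrable_finset_sum _ (fun l _ => hXint' l)
  set A : ℕ → Set Ω := fun m =>
    {ω | ε * m < |T m ω| ∧ ∀ l, m < l → l ≤ N → |T l ω| ≤ ε * l} with hA
  have hAmeas : ∀ m, MeasurableSet (A m) := by
    intro m
    have : A m = ((fun ω => |T m ω|) ⁻¹' Set.Ioi (ε * m)) ∩
        ⋂ l, {ω | m < l → l ≤ N → |T l ω| ≤ ε * l} := by
      ext ω; simp [hA, Set.mem_iInter]
    rw [this]
    refine ((hTm m).abs measurableSet_Ioi).inter (MeasurableSet.iInter fun l => ?_)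
    by_cases h : m < l ∧ l ≤ N
    · have : {ω | m < l → l ≤ N → |T l ω| ≤ ε * l} = {ω | |T l ω| ≤ ε * l} := by
        ext ω; simp [h.1, h.2]
      rw [this]
      exact measurableSet_le (hTm l).abs measurable_const
    · have : {ω | m < l → l ≤ N → |T l ω| ≤ ε * l} = Set.univ := by
        ext ω; simp only [Set.mem_setOf_eq, Set.mem_univ, iff_true]
        intro h1 h2; exact absurd ⟨h1, h2⟩ h
      rw [this]; exact MeasurableSet.univ
  have hunion : {ω | ∃ m, κ ≤ m ∧ m ≤ N ∧ ε * m < |∑ l ∈ range m, X l ω|}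
      = ⋃ m ∈ Finset.Icc κ N, A m := by
    ext ω
    simp only [Set.mem_setOf_eq, Set.mem_iUnion, Finset.mem_Icc, exists_prop]
    constructor
    · rintro ⟨m, hm1, hm2, hm3⟩
      set F : Finset ℕ := (Finset.Icc κ N).filter (fun n => ε * n < |T n ω|) with hF
      have hFne : F.Nonempty := ⟨m, by simp [hF, Finset.mem_Icc, hm1, hm2, hm3, hT]⟩
      set M := F.max' hFne with hM
      have hMF : M ∈ F := F.max'_mem hFne
      simp only [hF, Finset.mem_filter, Finset.mem_Icc] at hMF
      refine ⟨M, ⟨hMF.1.1, hMF.1.2⟩, hMF.2, ?_⟩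
      intro l hl1 hl2
      by_contra hcon
      push_neg at hcon
      have hlF : l ∈ F := by
        simp only [hF, Finset.mem_filter, Finset.mem_Icc]
        exact ⟨⟨le_trans hMF.1.1 (le_of_lt hl1), hl2⟩, hcon⟩
      exact absurd (F.le_max' l hlF) (not_le.mpr hl1)
    · rintro ⟨m, ⟨hm1, hm2⟩, hm3, _⟩
      exact ⟨m, hm1, hm2, hm3⟩
  have hdisj_aux : ∀ m m', m < m' → m' ≤ N → Disjoint (A m) (A m') := by
    intro m m' hmm' hm'N
    rw [Set.disjoint_left]
    intro ω hm hm'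
    exact absurd (hm.2 m' hmm' hm'N) (not_le.mpr hm'.1)
  have hdisj : Set.PairwiseDisjoint (↑(Finset.Icc κ N)) A := by
    intro m hm m' hm' hne
    simp only [Finset.coe_Icc, Set.mem_Icc] at hm hm'
    rcases lt_or_gt_of_ne hne with h | h
    · exact hdisj_aux m m' h hm'.2
    · exact (hdisj_aux m' m h hm.2).symm
  -- the key per-piece estimate
  have hkey : ∀ m ∈ Finset.Icc κ N, ε * κ * (ℙ (A m)).toReal ≤ ∫ ω in A m, |T κ ω| := by
    intro m hm
    simp only [Finset.mem_Icc] at hm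
    obtain ⟨hκm, hmN⟩ := hm
    have hm1 : 1 ≤ m := le_trans hκ hκm
    have hm0 : (0 : ℝ) < m := by exact_mod_cast hm1
    -- preimage representation
    set G : Ω → ℝ × (ℕ → ℝ) := fun ω => ((∑ l ∈ range m, X l ω : ℝ),
        (fun k => if m + k < N then X (m + k) ω else 0 : ℕ → ℝ)) with hG
    have hGm : Measurable G := by
      refine (Finset.measurable_sum _ (fun l _ => hXm l)).prodMk
        (measurable_pi_lambda _ (fun k => ?_))
      by_cases h : m + k < N
      · simpa [if_pos h] using hXm (m + k)
      · simp only [if_neg h]; exact measurable_const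
    set C : Set (ℝ × (ℕ → ℝ)) := {p | ε * m < |p.1| ∧
        ∀ l, m < l → l ≤ N → |p.1 + ∑ k ∈ range (l - m), p.2 k| ≤ ε * l} with hC
    have hCmeas : MeasurableSet C := by
      have : C = ((fun p : ℝ × (ℕ → ℝ) => |p.1|) ⁻¹' Set.Ioi (ε * m)) ∩
          ⋂ l, {p : ℝ × (ℕ → ℝ) | m < l → l ≤ N →
            |p.1 + ∑ k ∈ range (l - m), p.2 k| ≤ ε * l} := by
        ext p; simp [hC, Set.mem_iInter]
      rw [this]
      refine (measurable_fst.abs measurableSet_Ioi).inter (MeasurableSet.iInter fun l => ?_)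
      by_cases h : m < l ∧ l ≤ N
      · have : {p : ℝ × (ℕ → ℝ) | m < l → l ≤ N →
            |p.1 + ∑ k ∈ range (l - m), p.2 k| ≤ ε * l}
            = {p : ℝ × (ℕ → ℝ) | |p.1 + ∑ k ∈ range (l - m), p.2 k| ≤ ε * l} := by
          ext p; simp [h.1, h.2]
        rw [this]
        exact measurableSet_le (Measurable.abs (measurable_fst.add
          (Finset.measurable_sum _ (fun k _ => (measurable_pi_apply k).comp measurable_snd))))
          measurable_const
      · have : {p : ℝ × (ℕ → ℝ) | m < l → l ≤ N →
            |p.1 + ∑ k ∈ range (l - m), p.2 k| ≤ ε * l} = Set.univ := by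
          ext p; simp only [Set.mem_setOf_eq, Set.mem_univ, iff_true]
          intro h1 h2; exact absurd ⟨h1, h2⟩ h
        rw [this]; exact MeasurableSet.univ
    have hTsplit : ∀ l, m ≤ l → l ≤ N → ∀ ω,
        T l ω = T m ω + ∑ k ∈ range (l - m), (if m + k < N then X (m + k) ω else 0) := by
      intro l hml hlN ω
      have h1 : ∀ k ∈ range (l - m), (if m + k < N then X (m + k) ω else 0) = X (m + k) ω := by
        intro k hk
        have : m + k < l := by
          have := Finset.mem_range.mp hk; omega
        exact if_pos (lt_of_lt_of_le this hlN)
      rw [Finset.sum_congr rfl h1]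
      obtain ⟨d, rfl⟩ : ∃ d, l = m + d := ⟨l - m, by omega⟩
      simp only [hT, Nat.add_sub_cancel_left, Finset.sum_range_add]
    have hGA : G ⁻¹' C = A m := by
      ext ω
      simp only [Set.mem_preimage, hC, hG, Set.mem_setOf_eq, hA]
      constructor
      · rintro ⟨h1, h2⟩
        refine ⟨h1, fun l hl1 hl2 => ?_⟩
        rw [hTsplit l (le_of_lt hl1) hl2 ω]
        exact h2 l hl1 hl2
      · rintro ⟨h1, h2⟩
        refine ⟨h1, fun l hl1 hl2 => ?_⟩
        rw [← hTsplit l (le_of_lt hl1) hl2 ω]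
        exact h2 l hl1 hl2
    -- integral identity on preimage sets
    have hInt : ∀ C' : Set (ℝ × (ℕ → ℝ)), MeasurableSet C' → ∀ n, 1 ≤ n → n ≤ m →
        ∫ ω in G ⁻¹' C', T n ω = n * ∫ ω in G ⁻¹' C', X 0 ω := by
      intro C' hC' n hn1 hnm
      have : ∫ ω in G ⁻¹' C', T n ω = ∑ l ∈ range n, ∫ ω in G ⁻¹' C', X l ω := by
        exact integral_finset_sum _ (fun l _ => (hXint' l).integrableOn)
      rw [this]
      have heach : ∀ l ∈ range n, ∫ ω in G ⁻¹' C', X l ω = ∫ ω in G ⁻¹' C', X 0 ω := by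
        intro l hl
        have hlm : l < m := lt_of_lt_of_le (Finset.mem_range.mp hl) hnm
        exact key_swap X hXm hXindep hXident hlm (lt_of_lt_of_le hn1 hnm) hmN hC'
      rw [Finset.sum_congr rfl heach, Finset.sum_const, Finset.card_range, nsmul_eq_mul]
    -- split by sign
    set P : Set Ω := G ⁻¹' (C ∩ {p | 0 ≤ p.1}) with hP
    set Q : Set Ω := G ⁻¹' (C ∩ {p | p.1 < 0}) with hQ
    have hPmeas : MeasurableSet P := hGm (hCmeas.inter (measurableSet_le measurable_const measurable_fst))
    have hQmeas : MeasurableSet Q := hGm (hCmeas.inter (measurableSet_lt measurable_fst measurable_const))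
    have hCsplit : (C ∩ {p : ℝ × (ℕ → ℝ) | 0 ≤ p.1}) ∪ (C ∩ {p : ℝ × (ℕ → ℝ) | p.1 < 0})
        = C := by
      ext p
      constructor
      · rintro (⟨h, _⟩ | ⟨h, _⟩) <;> exact h
      · intro h
        rcases le_or_gt 0 p.1 with h' | h'
        · exact Or.inl ⟨h, h'⟩
        · exact Or.inr ⟨h, h'⟩
    have hPQ : A m = P ∪ Q := by
      rw [← hGA, hP, hQ, ← Set.preimage_union, hCsplit]
    have hPQdisj : Disjoint P Q := by
      rw [hP, hQ]
      refine Disjoint.preimage _ ?_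
      rw [Set.disjoint_left]
      rintro p ⟨_, h1⟩ ⟨_, h2⟩
      exact absurd (show p.1 < 0 from h2) (not_lt.mpr h1)
    have hPsub : ∀ ω ∈ P, 0 ≤ T m ω := fun ω hω => hω.2
    have hQsub : ∀ ω ∈ Q, T m ω < 0 := fun ω hω => hω.2
    have hPint1 : ∫ ω in P, |T m ω| = ∫ ω in P, T m ω :=
      setIntegral_congr_fun hPmeas (fun ω hω => abs_of_nonneg (hPsub ω hω))
    have hQint1 : ∫ ω in Q, |T m ω| = ∫ ω in Q, (-(T m ω)) :=
      setIntegral_congr_fun hQmeas (fun ω hω => abs_of_neg (hQsub ω hω))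
    have hPmeas' : MeasurableSet ({p : ℝ × (ℕ → ℝ)| 0 ≤ p.1} : Set (ℝ × (ℕ → ℝ))) :=
      measurableSet_le measurable_const measurable_fst
    have hQmeas' : MeasurableSet ({p : ℝ × (ℕ → ℝ)| p.1 < 0} : Set (ℝ × (ℕ → ℝ))) :=
      measurableSet_lt measurable_fst measurable_const
    have hκ0 : (0:ℝ) < κ := by exact_mod_cast hκ
    have hPTm : ∫ ω in P, T m ω = m * ∫ ω in P, X 0 ω :=
      hInt _ (hCmeas.inter hPmeas') m hm1 le_rfl
    have hPTκ : ∫ ω in P, T κ ω = κ * ∫ ω in P, X 0 ω :=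
      hInt _ (hCmeas.inter hPmeas') κ hκ hκm
    have hQTm : ∫ ω in Q, T m ω = m * ∫ ω in Q, X 0 ω :=
      hInt _ (hCmeas.inter hQmeas') m hm1 le_rfl
    have hQTκ : ∫ ω in Q, T κ ω = κ * ∫ ω in Q, X 0 ω :=
      hInt _ (hCmeas.inter hQmeas') κ hκ hκm
    have hPabs : ∫ ω in P, T κ ω ≤ ∫ ω in P, |T κ ω| :=
      setIntegral_mono_on (hTint κ).integrableOn (hTint κ).abs.integrableOn hPmeas
        (fun ω _ => le_abs_self _)
    have hQabs : ∫ ω in Q, (-(T κ ω)) ≤ ∫ ω in Q, |T κ ω| :=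
      setIntegral_mono_on (hTint κ).neg.integrableOn (hTint κ).abs.integrableOn hQmeas
        (fun ω _ => neg_le_abs _)
    have hQneg1 : ∫ ω in Q, (-(T m ω)) = - ∫ ω in Q, T m ω := integral_neg _
    have hQneg2 : ∫ ω in Q, (-(T κ ω)) = - ∫ ω in Q, T κ ω := integral_neg _
    have hsplitm : ∫ ω in A m, |T m ω| = (∫ ω in P, |T m ω|) + ∫ ω in Q, |T m ω| := by
      rw [hPQ]
      exact setIntegral_union hPQdisj hQmeas (hTint m).abs.integrableOn
        (hTint m).abs.integrableOn
    have hsplitκ : ∫ ω in A m, |T κ ω| = (∫ ω in P, |T κ ω|) + ∫ ω in Q, |T κ ω| := by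
      rw [hPQ]
      exact setIntegral_union hPQdisj hQmeas (hTint κ).abs.integrableOn
        (hTint κ).abs.integrableOn
    have claim2 : (κ : ℝ) * ∫ ω in A m, |T m ω| ≤ (m : ℝ) * ∫ ω in A m, |T κ ω| := by
      rw [hsplitm, hsplitκ, hPint1, hQint1]
      have h8 : (κ:ℝ) * (∫ ω in P, X 0 ω) - (κ:ℝ) * ∫ ω in Q, X 0 ω
          ≤ (∫ ω in P, |T κ ω|) + ∫ ω in Q, |T κ ω| := by
        have e1 : (κ:ℝ) * ∫ ω in P, X 0 ω ≤ ∫ ω in P, |T κ ω| := by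
          rw [← hPTκ]; exact hPabs
        have e2 : -((κ:ℝ) * ∫ ω in Q, X 0 ω) ≤ ∫ ω in Q, |T κ ω| := by
          rw [← hQTκ, ← hQneg2]; exact hQabs
        linarith
      have h9 := mul_le_mul_of_nonneg_left h8 (le_of_lt hm0)
      calc (κ : ℝ) * ((∫ ω in P, T m ω) + ∫ ω in Q, (-(T m ω)))
          = (m:ℝ) * ((κ:ℝ) * (∫ ω in P, X 0 ω) - (κ:ℝ) * ∫ ω in Q, X 0 ω) := by
            rw [hQneg1, hPTm, hQTm]; ring
        _ ≤ (m:ℝ) * ((∫ ω in P, |T κ ω|) + ∫ ω in Q, |T κ ω|) := h9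
    have claim1 : ε * m * (ℙ (A m)).toReal ≤ ∫ ω in A m, |T m ω| := by
      refine setIntegral_ge_of_const_le_real (c := ε * m) (hAmeas m) (measure_ne_top _ _) ?_
        (hTint m).abs.integrableOn
      intro ω hω
      exact le_of_lt hω.1
    have h5 : (κ:ℝ) * (ε * m * (ℙ (A m)).toReal) ≤ (κ:ℝ) * ∫ ω in A m, |T m ω| :=
      mul_le_mul_of_nonneg_left claim1 (le_of_lt hκ0)
    have h6 : (κ:ℝ) * (ε * m * (ℙ (A m)).toReal) ≤ (m:ℝ) * ∫ ω in A m, |T κ ω| :=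
      le_trans h5 claim2
    have h7 : (m:ℝ) * (ε * κ * (ℙ (A m)).toReal) ≤ (m:ℝ) * ∫ ω in A m, |T κ ω| := by
      rw [show (m:ℝ) * (ε * κ * (ℙ (A m)).toReal)
        = (κ:ℝ) * (ε * m * (ℙ (A m)).toReal) by ring]
      exact h6
    exact le_of_mul_le_mul_left h7 hm0
  -- assemble
  rw [hunion, measure_biUnion_finset hdisj (fun m _ => hAmeas m)]
  have htop : ∀ m ∈ Finset.Icc κ N, ℙ (A m) ≠ ⊤ := fun m _ => measure_ne_top _ _
  have hsum : (∑ m ∈ Finset.Icc κ N, ℙ (A m)).toReal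
      = ∑ m ∈ Finset.Icc κ N, (ℙ (A m)).toReal := ENNReal.toReal_sum htop
  have hbig : ε * κ * (∑ m ∈ Finset.Icc κ N, (ℙ (A m)).toReal) ≤ ∫ ω, |T κ ω| := by
    rw [Finset.mul_sum]
    have h1 : ∑ m ∈ Finset.Icc κ N, ε * κ * (ℙ (A m)).toReal
        ≤ ∑ m ∈ Finset.Icc κ N, ∫ ω in A m, |T κ ω| := Finset.sum_le_sum hkey
    have h2 : ∑ m ∈ Finset.Icc κ N, ∫ ω in A m, |T κ ω|
        = ∫ ω in ⋃ m ∈ Finset.Icc κ N, A m, |T κ ω| :=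
      (integral_biUnion_finset _ (fun m _ => hAmeas m) hdisj
        (fun m _ => (hTint κ).abs.integrableOn)).symm
    have h3 : ∫ ω in ⋃ m ∈ Finset.Icc κ N, A m, |T κ ω| ≤ ∫ ω, |T κ ω| :=
      setIntegral_le_integral (hTint κ).abs
        (Filter.Eventually.of_forall fun ω => abs_nonneg _)
    linarith
  have hεκ : (0:ℝ) < ε * κ := mul_pos hε (by exact_mod_cast hκ)
  have hfinal : (∑ m ∈ Finset.Icc κ N, ℙ (A m)).toReal
      ≤ (1 / (ε * κ)) * ∫ ω, |T κ ω| := by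
    rw [hsum]
    have h4 := mul_le_mul_of_nonneg_left hbig (le_of_lt (by positivity : (0:ℝ) < 1 / (ε * κ)))
    rw [show (1 / (ε * κ)) * (ε * κ * (∑ m ∈ Finset.Icc κ N, (ℙ (A m)).toReal))
      = ∑ m ∈ Finset.Icc κ N, (ℙ (A m)).toReal by field_simp] at h4
    exact h4
  calc (∑ m ∈ Finset.Icc κ N, ℙ (A m))
      = ENNReal.ofReal ((∑ m ∈ Finset.Icc κ N, ℙ (A m)).toReal) :=
        (ENNReal.ofReal_toReal (ENNReal.sum_ne_top.mpr htop)).symm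
    _ ≤ ENNReal.ofReal ((1 / (ε * κ)) * ∫ ω, |T κ ω|) := ENNReal.ofReal_le_ofReal hfinal

end aux

theorem stmt_5 {Ω : Type*} [MeasureSpace Ω] [IsProbabilityMeasure (ℙ : Measure Ω)]
    (Z : ℕ → Ω → ℝ) (hmeas : ∀ j, Measurable (Z j))
    (hindep : iIndepFun Z ℙ)
    (hident : ∀ j, IdentDistrib (Z j) (Z 1) ℙ ℙ)
    (hint : Integrable (fun ω => Z 1 ω ^ 2))
    (hvar : ∫ ω, Z 1 ω ^ 2 = 1)
    (δ : ℝ) (hδ : 0 < δ) (ε : ℝ) (hε : 0 < ε) (κ : ℕ) (hκ : 1 ≤ κ) :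
    ℙ {ω | ∃ m, κ ≤ m ∧
        ε * m * δ ^ 2 < |(∑ j ∈ Finset.Icc 1 m, (δ * Z j ω) ^ 2) - m * δ ^ 2|}
      ≤ ENNReal.ofReal
          ((1 / ε) * ∫ ω, |(1 / (κ : ℝ)) * ∑ j ∈ Finset.Icc 1 κ, (Z j ω ^ 2 - 1)|) ∧
    Tendsto (fun κ : ℕ => ∫ ω, |(1 / (κ : ℝ)) * ∑ j ∈ Finset.Icc 1 κ, (Z j ω ^ 2 - 1)|)
      atTop (nhds 0) := by
  classical
  set X : ℕ → Ω → ℝ := fun n ω => Z (n + 1) ω ^ 2 - 1 with hX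
  have hφ : Measurable (fun x : ℝ => x ^ 2 - 1) := by measurability
  have hXm : ∀ j, Measurable (X j) := fun j => hφ.comp (hmeas (j + 1))
  have hXindep : iIndepFun X ℙ :=
    (shift_indep Z hindep).comp (fun _ => fun x => x ^ 2 - 1) (fun _ => hφ)
  have hXident : ∀ j, IdentDistrib (X j) (X 0) ℙ ℙ := fun j => (hident (j + 1)).comp hφ
  have hXint : Integrable (X 0) := hint.sub (integrable_const 1)
  constructor
  · -- Part 1: the maximal inequality
    have hκ0 : (0 : ℝ) < κ := by exact_mod_cast hκ
    have hiff : ∀ (ω : Ω) (m : ℕ),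
        (ε * m * δ ^ 2 < |(∑ j ∈ Finset.Icc 1 m, (δ * Z j ω) ^ 2) - m * δ ^ 2|)
        ↔ ε * m < |∑ l ∈ range m, X l ω| := by
      intro ω m
      have hsum : (∑ j ∈ Finset.Icc 1 m, (δ * Z j ω) ^ 2) - (m : ℝ) * δ ^ 2
          = δ ^ 2 * ∑ l ∈ range m, X l ω := by
        rw [show Finset.Icc 1 m = Finset.Ico 1 (m + 1) from rfl, Finset.sum_Ico_eq_sum_range]
        simp only [Nat.add_sub_cancel]
        rw [Finset.mul_sum,
          show (m : ℝ) * δ ^ 2 = ∑ _l ∈ range m, δ ^ 2 by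
            rw [Finset.sum_const, Finset.card_range, nsmul_eq_mul],
          ← Finset.sum_sub_distrib]
        refine Finset.sum_congr rfl (fun k _ => ?_)
        simp only [hX]
        rw [add_comm 1 k]
        ring
      rw [hsum, abs_mul, abs_of_nonneg (sq_nonneg δ),
        show ε * (m : ℝ) * δ ^ 2 = δ ^ 2 * (ε * m) by ring]
      exact mul_lt_mul_iff_right₀ (by positivity)
    have hev : {ω | ∃ m, κ ≤ m ∧
          ε * m * δ ^ 2 < |(∑ j ∈ Finset.Icc 1 m, (δ * Z j ω) ^ 2) - m * δ ^ 2|}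
        = ⋃ N : ℕ, {ω | ∃ m, κ ≤ m ∧ m ≤ N ∧ ε * m < |∑ l ∈ range m, X l ω|} := by
      ext ω
      simp only [Set.mem_setOf_eq, Set.mem_iUnion]
      constructor
      · rintro ⟨m, hm1, hm2⟩
        exact ⟨m, m, hm1, le_rfl, (hiff ω m).mp hm2⟩
      · rintro ⟨N, m, hm1, _, hm3⟩
        exact ⟨m, hm1, (hiff ω m).mpr hm3⟩
    rw [hev]
    have hmono : Monotone (fun N : ℕ =>
        {ω | ∃ m, κ ≤ m ∧ m ≤ N ∧ ε * m < |∑ l ∈ range m, X l ω|}) := by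
      rintro N N' hNN' ω ⟨m, h1, h2, h3⟩
      exact ⟨m, h1, le_trans h2 hNN', h3⟩
    rw [hmono.measure_iUnion]
    apply iSup_le
    intro N
    refine le_trans (doob X hXm hXindep hXident hXint hε hκ N) (le_of_eq ?_)
    congr 1
    have habs : ∀ ω, |(1 / (κ : ℝ)) * ∑ j ∈ Finset.Icc 1 κ, (Z j ω ^ 2 - 1)|
        = (1 / (κ : ℝ)) * |∑ l ∈ range κ, X l ω| := by
      intro ω
      rw [abs_mul, abs_of_nonneg (by positivity : (0 : ℝ) ≤ 1 / (κ : ℝ))]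
      congr 2
      rw [show Finset.Icc 1 κ = Finset.Ico 1 (κ + 1) from rfl, Finset.sum_Ico_eq_sum_range]
      simp only [Nat.add_sub_cancel]
      refine Finset.sum_congr rfl (fun k _ => ?_)
      simp only [hX]
      rw [add_comm 1 k]
    rw [show (∫ ω, |(1 / (κ : ℝ)) * ∑ j ∈ Finset.Icc 1 κ, (Z j ω ^ 2 - 1)|)
        = ∫ ω, (1 / (κ : ℝ)) * |∑ l ∈ range κ, X l ω| from
        integral_congr_ae (Filter.Eventually.of_forall habs), integral_const_mul]
    ring
  · -- Part 2: L¹ law of large numbers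
    have hXindep' : Pairwise (Function.onFun (IndepFun · · (ℙ : Measure Ω)) X) := by
      intro i j hij
      exact ((hindep.indepFun (show i + 1 ≠ j + 1 by omega)).comp hφ hφ)
    have hmean : ∫ ω, X 0 ω = 0 := by
      have : ∫ ω, X 0 ω = (∫ ω, Z 1 ω ^ 2) - ∫ (_ : Ω), (1 : ℝ) :=
        integral_sub hint (integrable_const 1)
      simp [this, hvar]
    have h := strong_law_Lp (le_refl (1 : ENNReal)) (by simp) X
      (memLp_one_iff_integrable.mpr hXint) hXindep' hXident
    have hmean' : ∫ ω, X 0 ω ∂(ℙ : Measure Ω) = 0 := hmean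
    simp only [hmean'] at h
    have hfun : ∀ n : ℕ, ENNReal.ofReal
        (∫ ω, |(1 / (n : ℝ)) * ∑ j ∈ Finset.Icc 1 n, (Z j ω ^ 2 - 1)|)
        = eLpNorm (fun ω => (n : ℝ)⁻¹ • (∑ i ∈ range n, X i ω) - 0) 1 ℙ := by
      intro n
      have hsum : ∀ ω, (1 / (n : ℝ)) * ∑ j ∈ Finset.Icc 1 n, (Z j ω ^ 2 - 1)
          = (n : ℝ)⁻¹ • (∑ i ∈ range n, X i ω) - 0 := by
        intro ω
        have : ∑ j ∈ Finset.Icc 1 n, (Z j ω ^ 2 - 1) = ∑ i ∈ range n, X i ω := by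
          rw [show Finset.Icc 1 n = Finset.Ico 1 (n + 1) by rfl, Finset.sum_Ico_eq_sum_range]
          simp [hX, add_comm]
        simp [this, smul_eq_mul, one_div]
      have hi : Integrable (fun ω => (n : ℝ)⁻¹ • (∑ i ∈ range n, X i ω) - 0) := by
        simp only [sub_zero, smul_eq_mul]
        exact (integrable_finset_sum _
          (fun i _ => ((hXident i).integrable_iff).mpr hXint)).const_mul _
      rw [eLpNorm_one_eq_lintegral_enorm, ← ofReal_integral_norm_eq_lintegral_enorm hi]
      congr 1
      exact integral_congr_ae (Filter.Eventually.of_forall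
        (fun ω => by simp only [Real.norm_eq_abs, hsum ω]))
    have h2 : Tendsto (fun n : ℕ => ENNReal.ofReal
        (∫ ω, |(1 / (n : ℝ)) * ∑ j ∈ Finset.Icc 1 n, (Z j ω ^ 2 - 1)|)) atTop (nhds 0) := by
      simpa only [hfun] using h
    have h3 := (ENNReal.tendsto_toReal (by simp : (0 : ENNReal) ≠ ⊤)).comp h2
    simp only [ENNReal.toReal_zero] at h3
    convert h3 using 2 with n
    simp only [Function.comp]
    rw [ENNReal.toReal_ofReal (by positivity)]
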